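/- Let n ≥ 1, s ≥ 0, and let f_{kl} (1 ≤ k,l ≤ n) be a family of polynomials in n variables over ℝ, each homogeneous of degree s, satisfying the compatibility conditions f_{ij} = f_{ji} for all i,j and ∂f_{ij}/∂x^k = ∂f_{kj}/∂x^i for all i,j,k. Then there exists a unique polynomial u in n variables, homogeneous of degree s+2, such that ∂²u/∂x^k∂x^l = f_{kl} for all k,l. -/

import Mathlib

open MvPolynomial

/-- Euler's identity for homogeneous multivariate polynomials. -/
lemma euler_identity {n m : ℕ} {φ : MvPolynomial (Fin n) ℝ} (h : φ.IsHomogeneous m) :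
    ∑ i, X i * pderiv i φ = C (m : ℝ) * φ := by
  conv_lhs => rw [φ.as_sum]
  conv_rhs => rw [φ.as_sum]
  rw [Finset.mul_sum]
  simp_rw [map_sum, Finset.mul_sum]
  rw [Finset.sum_comm]
  refine Finset.sum_congr rfl fun d hd => ?_
  have hdeg : d.degree = m := by
    have := h (MvPolynomial.mem_support_iff.mp hd)
    rwa [Finsupp.degree_eq_weight_one]
  have key : ∀ i : Fin n,
      X i * pderiv i (monomial d (coeff d φ)) = monomial d (coeff d φ * (d i : ℝ)) := by
    intro i
    rw [pderiv_monomial]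
    rcases Nat.eq_zero_or_pos (d i) with h0 | h0
    · simp [h0]
    · have : Finsupp.single i 1 + (d - Finsupp.single i 1) = d := by
        rw [add_comm]
        exact tsub_add_cancel_of_le (Finsupp.single_le_iff.mpr h0)
      calc X i * monomial (d - Finsupp.single i 1) (coeff d φ * (d i : ℝ))
          = monomial (Finsupp.single i 1 + (d - Finsupp.single i 1))
              (coeff d φ * (d i : ℝ)) := by rw [monomial_single_add, pow_one]
        _ = monomial d (coeff d φ * (d i : ℝ)) := by rw [this]
  simp_rw [key, C_mul_monomial]
  rw [← map_sum (monomial d)]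
  congr 1
  rw [← Finset.mul_sum, ← Nat.cast_sum, mul_comm]
  congr 2
  rw [← hdeg, Finsupp.degree]
  exact (Finset.sum_subset (Finset.subset_univ _) (by
    intro x _ hx
    simpa using Finsupp.notMem_support_iff.mp hx)).symm

/-- The partial derivative of a homogeneous polynomial is homogeneous of one less degree. -/
lemma pderiv_isHomogeneous {n m : ℕ} {φ : MvPolynomial (Fin n) ℝ}
    (h : φ.IsHomogeneous (m + 1)) (i : Fin n) :
    (pderiv i φ).IsHomogeneous m := by
  conv => rw [φ.as_sum]
  rw [map_sum]
  refine MvPolynomial.IsHomogeneous.sum _ _ _ fun d hd => ?_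
  rw [pderiv_monomial]
  rcases Nat.eq_zero_or_pos (d i) with h0 | h0
  · simp [h0]
    exact isHomogeneous_zero _ _ _
  · refine isHomogeneous_monomial _ ?_
    have hdeg : d.degree = m + 1 := by
      have := h (MvPolynomial.mem_support_iff.mp hd)
      rwa [Finsupp.degree_eq_weight_one]
    have hds : (Finsupp.single i 1 : Fin n →₀ ℕ).degree = 1 := by
      rw [Finsupp.degree_single]
    have : (d - Finsupp.single i 1).degree + (Finsupp.single i 1).degree = d.degree := by
      simp only [Finsupp.degree_eq_weight_one]
      rw [← map_add, tsub_add_cancel_of_le (Finsupp.single_le_iff.mpr h0)]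
    rw [hds] at this
    omega

/-- If a family `f k l` of homogeneous polynomials of degree `s` in `n` variables
satisfies the compatibility conditions `f i j = f j i` and `∂f i j/∂x^k = ∂f k j/∂x^i`,
then there is a unique homogeneous polynomial `u` of degree `s + 2` with
`∂²u/∂x^k∂x^l = f k l` for all `k, l`. -/
theorem exists_unique_homogeneous_potential
    (n s : ℕ) (hn : 1 ≤ n)
    (f : Fin n → Fin n → MvPolynomial (Fin n) ℝ)
    (hhom : ∀ k l, (f k l).IsHomogeneous s)
    (hsym : ∀ i j, f i j = f j i)
    (hcomp : ∀ i j k, pderiv k (f i j) = pderiv i (f k j)) :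
    ∃! u : MvPolynomial (Fin n) ℝ, u.IsHomogeneous (s + 2) ∧
      ∀ k l, pderiv k (pderiv l u) = f k l := by
  have hs1 : ((s : ℝ) + 1) ≠ 0 := by positivity
  have hs2 : ((s : ℝ) + 2) ≠ 0 := by positivity
  set v : Fin n → MvPolynomial (Fin n) ℝ := fun l => ∑ k, X k * f k l with hv
  set w : MvPolynomial (Fin n) ℝ := ∑ l, X l * v l with hw
  -- v l is homogeneous of degree s + 1
  have hvhom : ∀ l, (v l).IsHomogeneous (s + 1) := by
    intro l
    refine MvPolynomial.IsHomogeneous.sum _ _ _ fun k _ => ?_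
    have := (isHomogeneous_X ℝ k).mul (hhom k l)
    rwa [add_comm] at this
  have hwhom : w.IsHomogeneous (s + 2) := by
    refine MvPolynomial.IsHomogeneous.sum _ _ _ fun l _ => ?_
    have := (isHomogeneous_X ℝ l).mul (hvhom l)
    rwa [show 1 + (s + 1) = s + 2 by ring] at this
  -- derivative of v
  have hdv : ∀ k l, pderiv k (v l) = C ((s : ℝ) + 1) * f k l := by
    intro k l
    rw [hv]
    simp only [map_sum, pderiv_mul]
    have : ∀ i : Fin n, pderiv k (X i) * f i l + X i * pderiv k (f i l)
        = (if i = k then f k l else 0) + X i * pderiv i (f k l) := by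
      intro i
      rw [hcomp i l k]
      rcases eq_or_ne i k with rfl | hik
      · simp
      · simp [pderiv_X_of_ne hik, hik]
    simp_rw [this]
    rw [Finset.sum_add_distrib, Finset.sum_ite_eq' _ k, if_pos (Finset.mem_univ k),
      euler_identity (hhom k l)]
    rw [map_add, map_one]; ring
  -- derivative of w
  have hvv : ∀ k, (∑ l, X l * f k l) = v k := by
    intro k
    rw [hv]
    exact Finset.sum_congr rfl fun l _ => by rw [hsym k l]
  have hdw : ∀ k, pderiv k w = C ((s : ℝ) + 2) * v k := by
    intro k
    rw [hw]
    simp only [map_sum, pderiv_mul]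
    have : ∀ l : Fin n, pderiv k (X l) * v l + X l * pderiv k (v l)
        = (if l = k then v k else 0) + C ((s : ℝ) + 1) * (X l * f k l) := by
      intro l
      rw [hdv k l]
      rcases eq_or_ne l k with rfl | hlk
      · simp; ring
      · simp [pderiv_X_of_ne hlk, hlk]; ring
    simp_rw [this]
    rw [Finset.sum_add_distrib, Finset.sum_ite_eq' _ k, if_pos (Finset.mem_univ k),
      ← Finset.mul_sum, hvv k]
    simp only [map_add, map_one, map_ofNat]
    ring
  set c : ℝ := (((s : ℝ) + 1) * ((s : ℝ) + 2))⁻¹ with hc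
  refine ⟨C c * w, ⟨hwhom.C_mul c, fun k l => ?_⟩, fun u' ⟨h1, h2⟩ => ?_⟩
  · rw [pderiv_C_mul, hdw l, pderiv_C_mul, pderiv_C_mul, hdv k l, ← mul_assoc, ← mul_assoc,
      ← C_mul, ← C_mul]
    rw [show c * ((s : ℝ) + 2) * ((s : ℝ) + 1) = 1 by rw [hc]; field_simp]
    rw [map_one, one_mul]
  · -- uniqueness
    have hdu' : ∀ l, C ((s : ℝ) + 1) * pderiv l u' = v l := by
      intro l
      have hph : (pderiv l u').IsHomogeneous (s + 1) :=
        pderiv_isHomogeneous (by rwa [show s + 1 + 1 = s + 2 by ring]) l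
      have := euler_identity hph
      push_cast at this
      rw [← this]
      simp_rw [h2]
      rfl
    have heu : C ((s : ℝ) + 2) * u' = ∑ l, X l * pderiv l u' := by
      have := euler_identity h1
      push_cast at this
      rw [this]
    have key : C (((s : ℝ) + 1) * ((s : ℝ) + 2)) * u' = w := by
      rw [C_mul, mul_assoc, heu, Finset.mul_sum, hw]
      refine Finset.sum_congr rfl fun l _ => ?_
      rw [← hdu' l]; ring
    have : C c * (C (((s : ℝ) + 1) * ((s : ℝ) + 2)) * u') = C c * w := by rw [key]
    rwa [← mul_assoc, ← C_mul, hc, inv_mul_cancel₀ (by positivity), map_one, one_mul] at this
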